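/- Let μ be a positive Borel probability measure on ℂ supported in the open disk of radius r, and let R > 2r. Then for all z with |z| ≥ R, the derivative of the Cauchy transform satisfies (1 − 2r/R)/(1 + r/R)⁴ ≤ |z² · (d/dz) C^μ(z)| ≤ 1/(1 − r/R)². In particular |z² (C^μ)'(z)| < 4 and (C^μ)'(z) ≠ 0 for |z| ≥ R. -/

import Mathlib

open MeasureTheory Metric

section CauchyTransformAux

open Complex

private lemma ct_mono_aux (r R s : ℝ) (hr : 0 < r) (hR : 2*r < R) (hs : R ≤ s) :
    R^3*(R-2*r)/(R+r)^4 ≤ s^3*(s-2*r)/(s+r)^4 := by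
  have hR0 : 0 < R := by linarith
  have hs0 : 0 < s := by linarith
  have hRr : 0 < R + r := by linarith
  have hsr : 0 < s + r := by linarith
  have h1 : R/(R+r) ≤ s/(s+r) := by
    rw [div_le_div_iff₀ hRr hsr]; nlinarith
  have h2 : (R-2*r)/(R+r) ≤ (s-2*r)/(s+r) := by
    rw [div_le_div_iff₀ hRr hsr]; nlinarith
  have h1n : 0 ≤ R/(R+r) := by positivity
  have h2n : 0 ≤ (R-2*r)/(R+r) := div_nonneg (by linarith) hRr.le
  have key : (R/(R+r))^3 * ((R-2*r)/(R+r)) ≤ (s/(s+r))^3 * ((s-2*r)/(s+r)) :=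
    mul_le_mul (pow_le_pow_left₀ h1n h1 3) h2 h2n (by positivity)
  calc R^3*(R-2*r)/(R+r)^4 = (R/(R+r))^3 * ((R-2*r)/(R+r)) := by
        rw [div_pow, div_mul_div_comm, ← pow_succ]
    _ ≤ (s/(s+r))^3 * ((s-2*r)/(s+r)) := key
    _ = s^3*(s-2*r)/(s+r)^4 := by
        rw [div_pow, div_mul_div_comm, ← pow_succ]

private lemma ct_div_re_eq (w q : ℂ) :
    (w / q).re = (normSq q)⁻¹ * (w * starRingEnd ℂ q).re := by
  rw [div_eq_mul_inv, Complex.inv_def]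
  have : w * (starRingEnd ℂ q * (((normSq q)⁻¹ : ℝ) : ℂ)) =
      (((normSq q)⁻¹ : ℝ) : ℂ) * (w * starRingEnd ℂ q) := by
    ring
  rw [this, Complex.re_ofReal_mul]

private lemma ct_re_lower (r R : ℝ) (hr : 0 < r) (hR : 2*r < R) (z y : ℂ)
    (hz : R ≤ ‖z‖) (hy : ‖y‖ < r) :
    R^3*(R-2*r)/(R+r)^4 ≤ (z^2/(z-y)^2).re := by
  set s := ‖z‖ with hsdef
  have hs0 : 0 < s := by linarith
  set d := z - y with hddef
  set w := z * starRingEnd ℂ y with hwdef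
  have hdlow : s - r ≤ ‖d‖ := by
    rw [hddef]; linarith [norm_sub_norm_le z y]
  have hdup : ‖d‖ ≤ s + r := by
    rw [hddef]; linarith [norm_sub_le z y]
  have hdpos : 0 < ‖d‖ := by linarith
  have h1 : (z^2/d^2).re = (normSq (d^2))⁻¹ * ((z * starRingEnd ℂ d)^2).re := by
    rw [ct_div_re_eq]
    congr 1
    rw [map_pow]
    ring_nf
  have hp : z * starRingEnd ℂ d = ((normSq z : ℝ) : ℂ) - w := by
    rw [hddef, map_sub, mul_sub, Complex.mul_conj]
  have hnz : normSq z = s^2 := by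
    rw [hsdef, Complex.sq_norm]
  have hwnorm : ‖w‖ ≤ s * r := by
    rw [hwdef, norm_mul, RCLike.norm_conj]
    exact mul_le_mul_of_nonneg_left hy.le hs0.le
  have hwre : |w.re| ≤ s * r :=
    le_trans (Complex.abs_re_le_norm w) hwnorm
  have hwim : |w.im| ≤ s * r :=
    le_trans (Complex.abs_im_le_norm w) hwnorm
  have hpre : (z * starRingEnd ℂ d).re = s^2 - w.re := by
    rw [hp, Complex.sub_re, Complex.ofReal_re, hnz]
  have hpim : (z * starRingEnd ℂ d).im = - w.im := by
    rw [hp, Complex.sub_im, Complex.ofReal_im]; ring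
  have hsq : ((z * starRingEnd ℂ d)^2).re = (s^2 - w.re)^2 - w.im^2 := by
    rw [sq, Complex.mul_re, hpre, hpim]; ring
  have hnum : s^3*(s-2*r) ≤ (s^2 - w.re)^2 - w.im^2 := by
    have h2 : s*(s-r) ≤ s^2 - w.re := by
      nlinarith [(abs_le.mp hwre).2]
    have h3 : w.im^2 ≤ (s*r)^2 := by
      nlinarith [(abs_le.mp hwim).1, (abs_le.mp hwim).2]
    nlinarith [mul_self_le_mul_self (by nlinarith : (0:ℝ) ≤ s*(s-r)) h2, h3]
  have hden : normSq (d^2) = ‖d‖^4 := by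
    rw [Complex.normSq_eq_norm_sq, norm_pow]
    ring
  have hdenle : normSq (d^2) ≤ (s+r)^4 := by
    rw [hden]
    exact pow_le_pow_left₀ (by positivity) hdup 4
  have hdenpos : 0 < normSq (d^2) := by
    rw [hden]; positivity
  have hnum0 : 0 ≤ s^3*(s-2*r) :=
    mul_nonneg (pow_nonneg hs0.le 3) (by linarith)
  have final : s^3*(s-2*r)/(s+r)^4 ≤ (z^2/d^2).re := by
    rw [h1, hsq, ← div_eq_inv_mul]
    calc s^3*(s-2*r)/(s+r)^4 ≤ s^3*(s-2*r)/normSq (d^2) :=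
          div_le_div_of_nonneg_left hnum0 hdenpos hdenle
      _ ≤ ((s^2 - w.re)^2 - w.im^2)/normSq (d^2) :=
          (div_le_div_iff_of_pos_right hdenpos).mpr hnum
  exact le_trans (ct_mono_aux r R s hr hR hz) final

private lemma ct_norm_upper (r R : ℝ) (hr : 0 < r) (hR : 2*r < R) (z y : ℂ)
    (hz : R ≤ ‖z‖) (hy : ‖y‖ < r) :
    ‖z^2 / (z-y)^2‖ ≤ 1/(1-r/R)^2 := by
  have hR0 : (0:ℝ) < R := by linarith
  set s := ‖z‖ with hsdef
  have hs : 0 < s - r := by linarith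
  have hd : s - r ≤ ‖z - y‖ := by
    linarith [norm_sub_norm_le z y]
  have hdpos : 0 < ‖z - y‖ := by linarith
  have h1 : ‖z^2/(z-y)^2‖ = s^2/‖z-y‖^2 := by
    rw [norm_div, norm_pow, norm_pow]
  rw [h1]
  have h2 : s^2/‖z-y‖^2 ≤ s^2/(s-r)^2 := by
    apply div_le_div_of_nonneg_left (by positivity) (by positivity)
    exact pow_le_pow_left₀ hs.le hd 2
  refine h2.trans ?_
  have h3 : 1/(1-r/R)^2 = R^2/(R-r)^2 := by
    field_simp
  rw [h3, div_le_div_iff₀ (pow_pos hs 2) (pow_pos (show (0:ℝ) < R-r by linarith) 2)]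
  have key : s*(R-r) ≤ R*(s-r) := by nlinarith
  nlinarith [mul_self_nonneg (s*(R-r)), mul_le_mul key key (by nlinarith) (by nlinarith)]

private lemma ct_deriv_part (r R : ℝ) (hr : 0 < r) (hR : 2*r < R)
    (μ : Measure ℂ) [IsProbabilityMeasure μ] (hae : ∀ᵐ y ∂μ, ‖y‖ < r)
    (z : ℂ) (hz : R ≤ ‖z‖) :
    Integrable (fun y => -1/((z - y)^2)) μ ∧
    HasDerivAt (fun w : ℂ => ∫ y, (w - y)⁻¹ ∂μ) (∫ y, -1/((z - y)^2) ∂μ) z := by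
  have hR0 : 0 < R := by linarith
  set ε := (R - 2*r)/2 with hε
  have hεpos : 0 < ε := by rw [hε]; linarith
  have hdist : ∀ x ∈ ball z ε, ∀ y : ℂ, ‖y‖ < r → R/2 ≤ ‖x - y‖ := by
    intro x hx y hy
    have h1 : ‖x - z‖ < ε := by
      rw [mem_ball, dist_eq_norm] at hx; exact hx
    have h2 : ‖z‖ ≤ ‖x - y‖ + ‖x - z‖ + ‖y‖ := by
      calc ‖z‖ = ‖(x - y) - (x - z) + y‖ := by ring_nf
        _ ≤ ‖(x - y) - (x - z)‖ + ‖y‖ := norm_add_le _ _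
        _ ≤ ‖x - y‖ + ‖x - z‖ + ‖y‖ := by linarith [norm_sub_le (x - y) (x - z)]
    rw [hε] at h1
    linarith
  refine hasDerivAt_integral_of_dominated_loc_of_deriv_le
    (F := fun w y => (w - y)⁻¹) (F' := fun w y => -1/((w - y)^2))
    (bound := fun _ => 4/R^2) (ball_mem_nhds z hεpos) ?_ ?_ ?_ ?_ ?_ ?_
  · exact Filter.Eventually.of_forall fun x =>
      ((measurable_const.sub measurable_id).inv).aestronglyMeasurable
  · apply (integrable_const ((R - r)⁻¹)).mono'
      ((measurable_const.sub measurable_id).inv).aestronglyMeasurable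
    filter_upwards [hae] with y hy
    have h1 : R - r ≤ ‖z - y‖ := by
      linarith [norm_sub_norm_le z y]
    change ‖(z - y)⁻¹‖ ≤ (R - r)⁻¹
    rw [norm_inv]
    exact inv_anti₀ (by linarith) h1
  · apply Measurable.aestronglyMeasurable
    fun_prop
  · filter_upwards [hae] with y hy
    intro x hx
    have h1 := hdist x hx y hy
    have h2 : 0 < ‖x - y‖ := by linarith
    rw [norm_div, norm_neg, norm_one, norm_pow]
    rw [div_le_div_iff₀ (by positivity) (by positivity)]
    nlinarith
  · exact integrable_const _
  · filter_upwards [hae] with y hy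
    intro x hx
    have h1 := hdist x hx y hy
    have hne : x - y ≠ 0 := by
      intro h
      rw [h, norm_zero] at h1
      linarith
    have hd := ((hasDerivAt_id x).sub_const y).inv hne
    simp at hd
    exact hd

end CauchyTransformAux

theorem stmt_1 (r R : ℝ) (hr : 0 < r) (hR : 2 * r < R)
    (μ : Measure ℂ) [IsProbabilityMeasure μ]
    (hsupp : μ (Metric.ball (0 : ℂ) r)ᶜ = 0) :
    ∀ z : ℂ, R ≤ ‖z‖ →
      (1 - 2 * r / R) / (1 + r / R) ^ 4 ≤
          ‖z ^ 2 * deriv (fun w : ℂ => ∫ y, (w - y)⁻¹ ∂μ) z‖ ∧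
      ‖z ^ 2 * deriv (fun w : ℂ => ∫ y, (w - y)⁻¹ ∂μ) z‖ ≤ 1 / (1 - r / R) ^ 2 ∧
      ‖z ^ 2 * deriv (fun w : ℂ => ∫ y, (w - y)⁻¹ ∂μ) z‖ < 4 ∧
      deriv (fun w : ℂ => ∫ y, (w - y)⁻¹ ∂μ) z ≠ 0 := by
  have hR0 : (0:ℝ) < R := by linarith
  have hae : ∀ᵐ y ∂μ, ‖y‖ < r := by
    rw [Filter.Eventually, mem_ae_iff]
    convert hsupp using 2
    ext y
    simp [mem_ball, dist_zero_right]
  intro z hz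
  obtain ⟨hint, hder⟩ := ct_deriv_part r R hr hR μ hae z hz
  have hderiv : deriv (fun w : ℂ => ∫ y, (w - y)⁻¹ ∂μ) z = ∫ y, -1/((z - y)^2) ∂μ :=
    hder.deriv
  -- the integral I
  set I := ∫ y, z^2/(z - y)^2 ∂μ with hI
  have hIint : Integrable (fun y => z^2/(z - y)^2) μ := by
    have := hint.const_mul (-(z^2))
    apply this.congr
    filter_upwards with y
    ring
  have hkey : z ^ 2 * deriv (fun w : ℂ => ∫ y, (w - y)⁻¹ ∂μ) z = -I := by
    rw [hderiv, ← integral_const_mul, hI, ← integral_neg]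
    apply integral_congr_ae
    filter_upwards with y
    ring
  have hnormeq : ‖z ^ 2 * deriv (fun w : ℂ => ∫ y, (w - y)⁻¹ ∂μ) z‖ = ‖I‖ := by
    rw [hkey, norm_neg]
  -- constant
  have hconst : (1 - 2 * r / R) / (1 + r / R) ^ 4 = R^3*(R-2*r)/(R+r)^4 := by
    field_simp
  -- lower bound
  have hlow : (1 - 2 * r / R) / (1 + r / R) ^ 4 ≤ ‖I‖ := by
    rw [hconst]
    have h1 : ∫ y, (z^2/(z - y)^2).re ∂μ = I.re := by
      simpa using integral_re hIint
    have h2 : R^3*(R-2*r)/(R+r)^4 ≤ ∫ y, (z^2/(z - y)^2).re ∂μ := by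
      have := integral_mono_ae (integrable_const (R^3*(R-2*r)/(R+r)^4)) hIint.re
        (by filter_upwards [hae] with y hy; exact ct_re_lower r R hr hR z y hz hy)
      simpa using this
    calc R^3*(R-2*r)/(R+r)^4 ≤ I.re := by rw [← h1]; exact h2
      _ ≤ ‖I‖ := by
          exact Complex.re_le_norm I
  -- upper bound
  have hup : ‖I‖ ≤ 1 / (1 - r / R) ^ 2 := by
    have := norm_integral_le_of_norm_le (μ := μ)
      (integrable_const (1 / (1 - r / R) ^ 2))
      (by filter_upwards [hae] with y hy; exact ct_norm_upper r R hr hR z y hz hy)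
    simpa using this
  have hlt4 : (1:ℝ) / (1 - r / R) ^ 2 < 4 := by
    have hrR : r/R < 1/2 := by
      rw [div_lt_iff₀ hR0]; linarith
    have h05 : (1:ℝ)/2 < 1 - r/R := by linarith
    rw [div_lt_iff₀ (by nlinarith)]
    nlinarith
  have hcpos : 0 < (1 - 2 * r / R) / (1 + r / R) ^ 4 := by
    have h1 : 0 < 1 - 2*r/R := by
      rw [sub_pos, div_lt_iff₀ hR0]; linarith
    have h2 : (0:ℝ) < (1 + r/R)^4 := by positivity
    positivity
  refine ⟨by rw [hnormeq]; exact hlow, by rw [hnormeq]; exact hup,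
    by rw [hnormeq]; exact lt_of_le_of_lt hup hlt4, ?_⟩
  intro h
  rw [h, mul_zero, norm_zero] at hnormeq
  have : ‖I‖ = 0 := hnormeq.symm
  rw [this] at hlow
  linarith
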